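/- arXiv:2405.02758 — 2 statements merged into one kernel-verified Lean document; each statement's English description precedes it below -/
import Mathlib

section
/- Let K be a number field and V a one-dimensional K ⊗ ℚ_ℓ-module. For every ℤ_ℓ-order O in K ⊗ ℚ_ℓ, there exists a ℤ_ℓ-lattice T ⊂ V whose stabilizer order {x ∈ K ⊗ ℚ_ℓ : xT ⊆ T} is exactly O. -/
open scoped TensorProduct

noncomputable section

/-- The structure map `ℤ_ℓ → K ⊗ ℚ_ℓ` (realized as `ℚ_ℓ ⊗[ℚ] K`). -/
def zellToAlg (ℓ : ℕ) [Fact ℓ.Prime] (K : Type*) [Field K] [Algebra ℚ K] :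
    ℤ_[ℓ] →+* (ℚ_[ℓ] ⊗[ℚ] K) :=
  (algebraMap ℚ_[ℓ] (ℚ_[ℓ] ⊗[ℚ] K)).comp PadicInt.Coe.ringHom

/-- Let `K` be a number field and `V` a one-dimensional module over
`A := K ⊗ ℚ_ℓ`.  For every `ℤ_ℓ`-order `O` in `A` (a subring stable under `ℤ_ℓ`,
finitely generated as a `ℤ_ℓ`-module, and spanning `A` over `ℚ_ℓ`) there exists a
`ℤ_ℓ`-lattice `T ⊂ V` (a `ℤ_ℓ`-stable, finitely generated, full-rank additive
subgroup) whose stabilizer order `{x ∈ A : x T ⊆ T}` is exactly `O`. -/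
theorem stmt_8 (ℓ : ℕ) [Fact ℓ.Prime] (K : Type*) [Field K] [NumberField K]
    (V : Type*) [AddCommGroup V] [Module (ℚ_[ℓ] ⊗[ℚ] K) V]
    (bV : Module.Basis (Fin 1) (ℚ_[ℓ] ⊗[ℚ] K) V)
    (O : Subring (ℚ_[ℓ] ⊗[ℚ] K))
    (hOstable : ∀ (c : ℤ_[ℓ]), ∀ x ∈ O, zellToAlg ℓ K c * x ∈ O)
    (hOfg : ∃ (m : ℕ) (f : Fin m → ℚ_[ℓ] ⊗[ℚ] K), (∀ i, f i ∈ O) ∧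
      ∀ x ∈ O, ∃ c : Fin m → ℤ_[ℓ], x = ∑ i, zellToAlg ℓ K (c i) * f i)
    (hOfull : ∀ x : ℚ_[ℓ] ⊗[ℚ] K, ∃ c : ℤ_[ℓ], c ≠ 0 ∧ zellToAlg ℓ K c * x ∈ O) :
    ∃ T : AddSubgroup V,
      (∀ (c : ℤ_[ℓ]), ∀ t ∈ T, zellToAlg ℓ K c • t ∈ T) ∧
      (∃ (m : ℕ) (f : Fin m → V), (∀ i, f i ∈ T) ∧
        ∀ t ∈ T, ∃ c : Fin m → ℤ_[ℓ], t = ∑ i, zellToAlg ℓ K (c i) • f i) ∧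
      (∀ x : V, ∃ c : ℤ_[ℓ], c ≠ 0 ∧ zellToAlg ℓ K c • x ∈ T) ∧
      (∀ x : ℚ_[ℓ] ⊗[ℚ] K, (∀ t ∈ T, x • t ∈ T) ↔ x ∈ O) := by
  classical
  set e : V := bV 0 with he
  -- injectivity of scalar action on e
  have hinj : ∀ a b : ℚ_[ℓ] ⊗[ℚ] K, a • e = b • e → a = b := by
    intro a b hab
    have := congrArg (fun v => bV.repr v 0) hab
    simpa [he, Module.Basis.repr_self] using this
  refine ⟨{ carrier := {v | ∃ x ∈ O, v = x • e}
            zero_mem' := ⟨0, O.zero_mem, by simp⟩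
            add_mem' := ?_
            neg_mem' := ?_ }, ?_, ?_, ?_, ?_⟩
  · rintro v w ⟨x, hx, rfl⟩ ⟨y, hy, rfl⟩
    exact ⟨x + y, O.add_mem hx hy, (add_smul x y e).symm⟩
  · rintro v ⟨x, hx, rfl⟩
    exact ⟨-x, O.neg_mem hx, (neg_smul x e).symm⟩
  · rintro c v ⟨x, hx, rfl⟩
    exact ⟨zellToAlg ℓ K c * x, hOstable c x hx, (mul_smul _ _ _).symm⟩
  · obtain ⟨m, f, hf, hspan⟩ := hOfg
    refine ⟨m, fun i => f i • e, fun i => ⟨f i, hf i, rfl⟩, ?_⟩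
    rintro v ⟨x, hx, rfl⟩
    obtain ⟨c, hc⟩ := hspan x hx
    refine ⟨c, ?_⟩
    rw [hc, Finset.sum_smul]
    simp [mul_smul]
  · intro v
    obtain ⟨y, hy⟩ : ∃ y : ℚ_[ℓ] ⊗[ℚ] K, v = y • e := by
      refine ⟨bV.repr v 0, ?_⟩
      conv_lhs => rw [← bV.sum_repr v]
      simp [he]
    obtain ⟨c, hc0, hc⟩ := hOfull y
    exact ⟨c, hc0, ⟨zellToAlg ℓ K c * y, hc, by rw [hy, mul_smul]⟩⟩
  · intro x
    constructor
    · intro h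
      obtain ⟨z, hz, hze⟩ := h e ⟨1, O.one_mem, (one_smul _ _).symm⟩
      have : x = z := hinj x z (by simpa using hze)
      rw [this]; exact hz
    · rintro hx v ⟨y, hy, rfl⟩
      exact ⟨x * y, O.mul_mem hx hy, (mul_smul _ _ _).symm⟩
end
end

section
/- Let K be a CM number field of degree 2g with maximal totally real subfield K⁺, let R be an order in K stable under complex conjugation, and R⁺ = R ∩ K⁺. The norm map N : Cl(R) → Cl⁺(R⁺) on ideal classes of invertible fractional ideals, induced by I ↦ I·Ī, is a well-defined group homomorphism into the narrow class group of R⁺. -/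
noncomputable section

variable {K : Type*} [Field K] [CharZero K]

/-- The fixed field `K⁺` of the complex conjugation `σ` of a CM field `K`
(the maximal totally real subfield). -/
def fixedSubfield (σ : K ≃ₐ[ℚ] K) : Subfield K where
  carrier := {x | σ x = x}
  mul_mem' := fun ha hb => by
    simp only [Set.mem_setOf_eq] at *; rw [map_mul, ha, hb]
  one_mem' := map_one σ
  add_mem' := fun ha hb => by
    simp only [Set.mem_setOf_eq] at *; rw [map_add, ha, hb]
  zero_mem' := map_zero σ
  neg_mem' := fun ha => by
    simp only [Set.mem_setOf_eq] at *; rw [map_neg, ha]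
  inv_mem' := fun a ha => by
    simp only [Set.mem_setOf_eq] at *; rw [map_inv₀, ha]

/-- The order `R⁺ = R ∩ K⁺` of the totally real subfield `K⁺`. -/
def orderPlus (σ : K ≃ₐ[ℚ] K) (R : Subalgebra ℤ K) :
    Subalgebra ℤ ↥(fixedSubfield σ) where
  carrier := {x | (x : K) ∈ R}
  mul_mem' := fun ha hb => R.mul_mem ha hb
  one_mem' := R.one_mem
  add_mem' := fun ha hb => R.add_mem ha hb
  zero_mem' := R.zero_mem
  algebraMap_mem' := fun n => by
    have h : ((algebraMap ℤ ↥(fixedSubfield σ) n : ↥(fixedSubfield σ)) : K) = (n : K) := by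
      simp [algebraMap_int_eq, map_intCast]
    show ((algebraMap ℤ ↥(fixedSubfield σ) n : ↥(fixedSubfield σ)) : K) ∈ R
    rw [h]
    exact intCast_mem R n

/-- The conjugate `Ī` of a fractional `R`-ideal `I`: the `R`-module generated by
`σ(I)` (which equals `σ(I)` setwise when `R` is stable under `σ`). -/
def conjIdeal (σ : K ≃ₐ[ℚ] K) (R : Subalgebra ℤ K) (I : Submodule R K) :
    Submodule R K :=
  Submodule.span R (σ '' (I : Set K))

/-- The restriction `J ∩ K⁺` of a fractional `R`-ideal `J` to the totally real
subfield, as a module over `R⁺`. -/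
def restrictPlus (σ : K ≃ₐ[ℚ] K) (R : Subalgebra ℤ K) (J : Submodule R K) :
    Submodule (orderPlus σ R) ↥(fixedSubfield σ) where
  carrier := {x | (x : K) ∈ J}
  add_mem' := fun ha hb => J.add_mem ha hb
  zero_mem' := J.zero_mem
  smul_mem' := fun c x hx =>
    J.smul_mem ⟨((c : ↥(fixedSubfield σ)) : K), c.2⟩ hx

noncomputable instance (R : Subalgebra ℤ K) : CommGroup (Submodule R K)ˣ :=
  { (inferInstance : Group (Submodule R K)ˣ) with
    mul_comm := fun a b =>
      Units.ext (mul_comm (a : Submodule R K) (b : Submodule R K)) }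

noncomputable instance (σ : K ≃ₐ[ℚ] K) (R : Subalgebra ℤ K) :
    CommGroup (Submodule (orderPlus σ R) ↥(fixedSubfield σ))ˣ :=
  { (inferInstance : Group (Submodule (orderPlus σ R) ↥(fixedSubfield σ))ˣ) with
    mul_comm := fun a b => Units.ext
      (mul_comm (a : Submodule (orderPlus σ R) ↥(fixedSubfield σ))
        (b : Submodule (orderPlus σ R) ↥(fixedSubfield σ))) }

/-- The subgroup of principal invertible fractional ideals; the quotient by it is the
class group `Cl(R)`. -/
def principalSubgroup (R : Subalgebra ℤ K) : Subgroup (Submodule R K)ˣ :=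
  Subgroup.closure {u | ∃ x : K, x ≠ 0 ∧ (u : Submodule R K) = Submodule.span R {x}}

/-- The subgroup of totally positive principal invertible fractional ideals of the
totally real field `K⁺`; the quotient by it is the narrow class group `Cl⁺(R⁺)`. -/
def narrowPrincipalSubgroup (σ : K ≃ₐ[ℚ] K) (R : Subalgebra ℤ K) :
    Subgroup (Submodule (orderPlus σ R) ↥(fixedSubfield σ))ˣ :=
  Subgroup.closure {u | ∃ x : ↥(fixedSubfield σ),
    (∀ φ : ↥(fixedSubfield σ) →+* ℝ, 0 < φ x) ∧
    (u : Submodule (orderPlus σ R) ↥(fixedSubfield σ)) =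
      Submodule.span (orderPlus σ R) {x}}

section Aux

variable {σ : K ≃ₐ[ℚ] K} {R : Subalgebra ℤ K}

lemma sigma_mem_conjIdeal (I : Submodule R K) {y : K} (hy : y ∈ I) :
    σ y ∈ conjIdeal σ R I :=
  Submodule.subset_span ⟨y, hy, rfl⟩

lemma sigma_mem_of_mem_conjIdeal (hσinv : ∀ x, σ (σ x) = x)
    (hRstable : ∀ x ∈ R, σ x ∈ R) (I : Submodule R K) {z : K}
    (hz : z ∈ conjIdeal σ R I) : σ z ∈ I := by
  refine Submodule.span_induction ?_ ?_ ?_ ?_ hz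
  · rintro x ⟨y, hy, rfl⟩
    rwa [hσinv]
  · simpa using I.zero_mem
  · intro a b _ _ ha hb
    rw [map_add]; exact I.add_mem ha hb
  · intro r a _ ha
    have hr : σ (r : K) ∈ R := hRstable _ r.2
    have h1 : σ (r • a) = (⟨σ (r : K), hr⟩ : R) • σ a := by
      simp only [Algebra.smul_def, map_mul]
      rfl
    rw [h1]
    exact I.smul_mem _ ha

lemma mem_conjIdeal_iff (hσinv : ∀ x, σ (σ x) = x)
    (hRstable : ∀ x ∈ R, σ x ∈ R) (I : Submodule R K) {z : K} :
    z ∈ conjIdeal σ R I ↔ σ z ∈ I := by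
  constructor
  · exact sigma_mem_of_mem_conjIdeal hσinv hRstable I
  · intro h
    have := sigma_mem_conjIdeal (σ := σ) I h
    rwa [hσinv] at this

lemma conjIdeal_mul (hσinv : ∀ x, σ (σ x) = x) (hRstable : ∀ x ∈ R, σ x ∈ R)
    (I J : Submodule R K) :
    conjIdeal σ R (I * J) = conjIdeal σ R I * conjIdeal σ R J := by
  apply le_antisymm
  · rw [conjIdeal, Submodule.span_le]
    rintro x ⟨y, hy, rfl⟩
    refine Submodule.mul_induction_on hy ?_ ?_
    · intro m hm n hn
      rw [map_mul]
      exact Submodule.mul_mem_mul (sigma_mem_conjIdeal I hm) (sigma_mem_conjIdeal J hn)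
    · intro a b ha hb
      rw [map_add]; exact Submodule.add_mem _ ha hb
  · rw [Submodule.mul_le]
    intro p hp q hq
    rw [mem_conjIdeal_iff hσinv hRstable, map_mul]
    exact Submodule.mul_mem_mul (sigma_mem_of_mem_conjIdeal hσinv hRstable I hp)
      (sigma_mem_of_mem_conjIdeal hσinv hRstable J hq)

lemma mem_one_iff_submodule {z : K} : z ∈ (1 : Submodule R K) ↔ z ∈ R := by
  rw [Submodule.one_eq_range]
  constructor
  · rintro ⟨y, rfl⟩; exact y.2
  · intro h; exact ⟨⟨z, h⟩, rfl⟩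

lemma conjIdeal_one (hσinv : ∀ x, σ (σ x) = x) (hRstable : ∀ x ∈ R, σ x ∈ R) :
    conjIdeal σ R (1 : Submodule R K) = 1 := by
  ext z
  rw [mem_conjIdeal_iff hσinv hRstable, mem_one_iff_submodule, mem_one_iff_submodule]
  constructor
  · intro h
    have := hRstable _ h; rwa [hσinv] at this
  · exact hRstable z

end Aux
section Aux2

variable {σ : K ≃ₐ[ℚ] K} {R : Subalgebra ℤ K}

lemma mem_restrictPlus_iff {J : Submodule R K} {x : ↥(fixedSubfield σ)} :
    x ∈ restrictPlus σ R J ↔ (x : K) ∈ J := Iff.rfl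

lemma mem_one_iff_plus {x : ↥(fixedSubfield σ)} :
    x ∈ (1 : Submodule (orderPlus σ R) ↥(fixedSubfield σ)) ↔ x ∈ orderPlus σ R := by
  rw [Submodule.one_eq_range]
  constructor
  · rintro ⟨y, rfl⟩; exact y.2
  · intro h; exact ⟨⟨x, h⟩, rfl⟩

lemma restrictPlus_one :
    restrictPlus σ R (1 : Submodule R K) = 1 := by
  ext x
  rw [mem_restrictPlus_iff, mem_one_iff_submodule, mem_one_iff_plus]
  exact Iff.rfl

lemma restrictPlus_mul_le (X Y : Submodule R K) :
    restrictPlus σ R X * restrictPlus σ R Y ≤ restrictPlus σ R (X * Y) := by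
  rw [Submodule.mul_le]
  intro a ha b hb
  rw [mem_restrictPlus_iff] at *
  have : ((a * b : ↥(fixedSubfield σ)) : K) = (a : K) * (b : K) := rfl
  rw [this]
  exact Submodule.mul_mem_mul ha hb

/-- The inclusion `R⁺ →+* R`. -/
def incRing (σ : K ≃ₐ[ℚ] K) (R : Subalgebra ℤ K) : ↥(orderPlus σ R) →+* ↥R where
  toFun a := ⟨((a : ↥(fixedSubfield σ)) : K), a.2⟩
  map_one' := rfl
  map_mul' _ _ := rfl
  map_zero' := rfl
  map_add' _ _ := rfl

lemma incRing_injective : Function.Injective (incRing σ R) := by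
  intro a b h
  have h2 : ((incRing σ R a : ↥R) : K) = ((incRing σ R b : ↥R) : K) := by rw [h]
  ext
  exact h2

/-- Conjugation as a ring endomorphism of `R`. -/
def sigmaR (σ : K ≃ₐ[ℚ] K) (R : Subalgebra ℤ K) (hRstable : ∀ x ∈ R, σ x ∈ R) :
    ↥R →+* ↥R where
  toFun r := ⟨σ (r : K), hRstable _ r.2⟩
  map_one' := by ext; simp
  map_mul' _ _ := by ext; simp
  map_zero' := by ext; simp
  map_add' _ _ := by ext; simp

/-- The ideal of `R` attached to a fractional ideal contained in `R`. -/
def idealOf (R : Subalgebra ℤ K) (M : Submodule R K) : Ideal ↥R where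
  carrier := {r | (r : K) ∈ M}
  add_mem' := fun ha hb => M.add_mem ha hb
  zero_mem' := M.zero_mem
  smul_mem' := fun c x hx => by
    show ((c * x : ↥R) : K) ∈ M
    have : ((c * x : ↥R) : K) = c • (x : K) := (Algebra.smul_def c (x : K)).symm
    rw [this]
    exact M.smul_mem c hx

lemma mem_idealOf_iff {M : Submodule R K} {r : ↥R} : r ∈ idealOf R M ↔ (r : K) ∈ M := Iff.rfl

end Aux2
section Aux3

variable {σ : K ≃ₐ[ℚ] K} {R : Subalgebra ℤ K}

lemma noetherianR (hRfg : Module.Finite ℤ R) : IsNoetherianRing ↥R := by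
  have h1 : IsNoetherian ℤ ↥R := isNoetherian_of_isNoetherianRing_of_finite ℤ ↥R
  exact isNoetherianRing_iff.mpr (isNoetherian_of_tower ℤ h1)

set_option synthInstance.maxHeartbeats 1000000 in
lemma incRing_isIntegral (hRfg : Module.Finite ℤ R) : (incRing σ R).IsIntegral := by
  intro x
  have h1 : IsIntegral ℤ x := IsIntegral.of_finite ℤ x
  letI : Algebra ↥(orderPlus σ R) ↥R := (incRing σ R).toAlgebra
  haveI : IsScalarTower ℤ ↥(orderPlus σ R) ↥R :=
    IsScalarTower.of_algebraMap_eq' (Subsingleton.elim _ _)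
  exact h1.tower_top

lemma map_incRing_ne_top (hRfg : Module.Finite ℤ R) {m : Ideal ↥(orderPlus σ R)}
    (hm : m ≠ ⊤) : Ideal.map (incRing σ R) m ≠ ⊤ := by
  intro h
  refine hm ?_
  rw [← Ideal.map_eq_top_iff_of_ker_le (incRing σ R) ?_ (incRing_isIntegral hRfg)]
  · exact h
  · intro x hx
    have : incRing σ R x = 0 := hx
    have h0 : x = 0 := incRing_injective (by simpa using this)
    simp [h0]

set_option synthInstance.maxHeartbeats 1000000 in
lemma maximalsOver_finite (hRfg : Module.Finite ℤ R) {m : Ideal ↥(orderPlus σ R)}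
    (hm : m.IsMaximal) :
    {n : Ideal ↥R | n.IsMaximal ∧ Ideal.map (incRing σ R) m ≤ n}.Finite := by
  haveI := noetherianR hRfg
  letI : Algebra ↥(orderPlus σ R) ↥R := (incRing σ R).toAlgebra
  haveI : Algebra.IsIntegral ↥(orderPlus σ R) ↥R := ⟨incRing_isIntegral hRfg⟩
  have hsub : {n : Ideal ↥R | n.IsMaximal ∧ Ideal.map (incRing σ R) m ≤ n} ⊆
      (Ideal.map (incRing σ R) m).minimalPrimes := by
    rintro n ⟨hnmax, hn⟩
    refine ⟨⟨hnmax.isPrime, hn⟩, ?_⟩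
    rintro p ⟨hp, hmp⟩ hpn
    have hcomap_ne : Ideal.comap (incRing σ R) p ≠ ⊤ := by
      intro htop
      have : (1 : ↥(orderPlus σ R)) ∈ Ideal.comap (incRing σ R) p := htop ▸ trivial
      have h1 : (1 : ↥R) ∈ p := by simpa using this
      exact hp.ne_top ((Ideal.eq_top_iff_one p).mpr h1)
    have hmle : m ≤ Ideal.comap (incRing σ R) p :=
      Ideal.le_comap_map.trans (Ideal.comap_mono hmp)
    have hcm : Ideal.comap (incRing σ R) p = m := (hm.eq_of_le hcomap_ne hmle).symm
    haveI : p.IsPrime := hp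
    have hpmax : p.IsMaximal := by
      refine Ideal.isMaximal_of_isIntegral_of_isMaximal_comap
        (R := ↥(orderPlus σ R)) p ?_
      show (Ideal.comap (incRing σ R) p).IsMaximal
      rw [hcm]
      exact hm
    have hpe : p = n := hpmax.eq_of_le hnmax.ne_top hpn
    rw [hpe]
  exact Set.Finite.subset (by
    rw [Ideal.minimalPrimes_eq_comap]
    exact Set.Finite.image _ (minimalPrimes.finite_of_isNoetherianRing _)) hsub

lemma exists_list_of_mem_mul {M N : Submodule R K} {z : K} (hz : z ∈ M * N) :
    ∃ l : List (K × K), (∀ p ∈ l, p.1 ∈ M ∧ p.2 ∈ N) ∧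
      z = (l.map fun p => p.1 * p.2).sum := by
  refine Submodule.mul_induction_on hz ?_ ?_
  · intro m hm n hn
    exact ⟨[(m, n)], by rintro p hp; simp at hp; simp [hp, hm, hn], by simp⟩
  · rintro a b ⟨la, hla, rfl⟩ ⟨lb, hlb, rfl⟩
    refine ⟨la ++ lb, ?_, by simp⟩
    intro p hp
    rcases List.mem_append.mp hp with h | h
    · exact hla p h
    · exact hlb p h

end Aux3
section Aux4

variable {σ : K ≃ₐ[ℚ] K} {R : Subalgebra ℤ K}

set_option maxHeartbeats 1000000 in
lemma crt_element {T : Type*} [CommRing T] (t : Finset (Ideal T))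
    (ht : ∀ n ∈ t, n.IsMaximal) {n : Ideal T} (hn : n ∈ t) :
    ∃ e : T, e - 1 ∈ n ∧ ∀ n' ∈ t, n' ≠ n → e ∈ n' := by
  classical
  haveI : n.IsMaximal := ht n hn
  haveI : n.IsPrime := (ht n hn).isPrime
  have hsup : n ⊔ (t.erase n).inf id = ⊤ := by
    by_contra h
    obtain ⟨M, hMmax, hM⟩ := Ideal.exists_le_maximal _ h
    have hnM : n ≤ M := le_trans le_sup_left hM
    have hMn : M = n := ((ht n hn).eq_of_le hMmax.ne_top hnM).symm
    have hinf0 : (t.erase n).inf id ≤ M := le_sup_right.trans hM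
    have hinf : (t.erase n).inf id ≤ n := by rw [hMn] at hinf0; exact hinf0
    obtain ⟨n', hn', hle⟩ := (Ideal.IsPrime.inf_le' ‹n.IsPrime›).mp hinf
    have : n' = n := (ht n' (Finset.mem_of_mem_erase hn')).eq_of_le
      (ht n hn).ne_top hle
    exact (Finset.ne_of_mem_erase hn') this
  have h1 : (1 : T) ∈ n ⊔ (t.erase n).inf id := by rw [hsup]; exact Submodule.mem_top
  obtain ⟨u, hu, e, he, hue⟩ := Submodule.mem_sup.mp h1
  refine ⟨e, ?_, ?_⟩
  · have : e - 1 = -u := by rw [← hue]; ring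
    rw [this]; exact n.neg_mem hu
  · intro n' hn' hne
    exact (Finset.inf_le (Finset.mem_erase.mpr ⟨hne, hn'⟩) : (t.erase n).inf id ≤ id n') he

lemma one_mem_of_terms_mem {n : Ideal ↥R} {l : List (K × K)}
    (hR : ∀ p ∈ l, p.1 * p.2 ∈ R)
    (hall : ∀ p ∈ l, ∀ h : p.1 * p.2 ∈ R, (⟨p.1 * p.2, h⟩ : ↥R) ∈ n)
    (hsum : (1 : K) = (l.map fun p => p.1 * p.2).sum) : (1 : ↥R) ∈ n := by
  have key : ∀ l' : List (K × K), (∀ p ∈ l', p.1 * p.2 ∈ R) →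
      (∀ p ∈ l', ∀ h : p.1 * p.2 ∈ R, (⟨p.1 * p.2, h⟩ : ↥R) ∈ n) →
      ∃ r ∈ n, (r : K) = (l'.map fun p => p.1 * p.2).sum := by
    intro l'
    induction l' with
    | nil => exact fun _ _ => ⟨0, n.zero_mem, by simp⟩
    | cons hd tl ih =>
      intro hR' h'
      obtain ⟨r, hr, hrv⟩ := ih (fun p hp => hR' p (List.mem_cons_of_mem hd hp))
        (fun p hp => h' p (List.mem_cons_of_mem hd hp))
      have hhd : hd.1 * hd.2 ∈ R := hR' hd List.mem_cons_self
      exact ⟨⟨hd.1 * hd.2, hhd⟩ + r, n.add_mem (h' hd List.mem_cons_self hhd) hr,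
        by simp [hrv]⟩
  obtain ⟨r, hr, hrv⟩ := key l hR hall
  have : r = 1 := Subtype.ext (by rw [hrv, ← hsum]; rfl)
  rwa [this] at hr

lemma exists_good_a (hRfg : Module.Finite ℤ R)
    (I I' : Submodule R K) (hII' : I * I' = 1)
    {m : Ideal ↥(orderPlus σ R)} (hm : m.IsMaximal) :
    ∃ a ∈ I, (idealOf R (Submodule.span ↥R {a} * I')) ⊔ Ideal.map (incRing σ R) m = ⊤ := by
  classical
  set m' := Ideal.map (incRing σ R) m with hm'
  have hs : {n : Ideal ↥R | n.IsMaximal ∧ m' ≤ n}.Finite := maximalsOver_finite hRfg hm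
  set t := hs.toFinset with htdef
  have htmax : ∀ n ∈ t, n.IsMaximal := by
    intro n hn; exact (hs.mem_toFinset.mp hn).1
  -- decomposition of 1
  have h1mem : (1 : K) ∈ I * I' := by
    rw [hII']; exact mem_one_iff_submodule.mpr R.one_mem
  obtain ⟨l, hl, hsum⟩ := exists_list_of_mem_mul h1mem
  have hlR : ∀ p ∈ l, p.1 * p.2 ∈ R := by
    intro p hp
    have : p.1 * p.2 ∈ I * I' := Submodule.mul_mem_mul (hl p hp).1 (hl p hp).2
    rw [hII'] at this
    exact mem_one_iff_submodule.mp this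
  -- for each n in t, choose a term not in n
  have hchoice : ∀ n ∈ t, ∃ p ∈ l, ∀ h : p.1 * p.2 ∈ R, (⟨p.1 * p.2, h⟩ : ↥R) ∉ n := by
    intro n hn
    by_contra hno
    push_neg at hno
    have h1n : (1 : ↥R) ∈ n := one_mem_of_terms_mem hlR
      (fun p hp h => by
        obtain ⟨_, hq⟩ := hno p hp
        exact hq) hsum
    exact (htmax n hn).ne_top ((Ideal.eq_top_iff_one n).mpr h1n)
  choose! px hpxl hpxn using hchoice
  choose! e he1 he2 using fun n (hn : n ∈ t) => crt_element t htmax hn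
  set a : K := ∑ n ∈ t, (e n) • (px n).1 with ha
  have haI : a ∈ I := by
    apply Submodule.sum_mem
    intro n hn
    exact I.smul_mem _ (hl _ (hpxl n hn)).1
  refine ⟨a, haI, ?_⟩
  by_contra hne
  obtain ⟨M, hMmax, hM⟩ := Ideal.exists_le_maximal _ hne
  have hMt : M ∈ t := hs.mem_toFinset.mpr ⟨hMmax, le_trans le_sup_right hM⟩
  set y : K := (px M).2 with hy
  have hyI' : y ∈ I' := (hl _ (hpxl M hMt)).2
  have hay : a * y ∈ Submodule.span ↥R {a} * I' := by
    rw [Submodule.mem_span_singleton_mul]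
    exact ⟨y, hyI', rfl⟩
  have hayR : a * y ∈ R := by
    have h2 : a * y ∈ I * I' := Submodule.mul_mem_mul haI hyI'
    rw [hII'] at h2
    exact mem_one_iff_submodule.mp h2
  have hinM : (⟨a * y, hayR⟩ : ↥R) ∈ M := le_trans le_sup_left hM hay
  -- rewrite it as a sum
  have hterm : ∀ n ∈ t, (px n).1 * y ∈ R := by
    intro n hn
    have h2 : (px n).1 * y ∈ I * I' := Submodule.mul_mem_mul (hl _ (hpxl n hn)).1 hyI'
    rw [hII'] at h2
    exact mem_one_iff_submodule.mp h2
  have hsplit : (⟨a * y, hayR⟩ : ↥R) =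
      ∑ n ∈ t.attach, (e n.1) * ⟨(px n.1).1 * y, hterm n.1 n.2⟩ := by
    apply Subtype.ext
    have hc : ((∑ n ∈ t.attach, (e n.1) * ⟨(px n.1).1 * y, hterm n.1 n.2⟩ : ↥R) : K)
        = ∑ n ∈ t.attach, ((e n.1 : K) * ((px n.1).1 * y)) := by
      rw [AddSubmonoidClass.coe_finset_sum]
      apply Finset.sum_congr rfl
      intro n _
      rfl
    rw [hc]
    show a * y = _
    rw [ha, Finset.sum_mul, ← Finset.sum_attach t (fun n => ((e n) • (px n).1) * y)]
    apply Finset.sum_congr rfl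
    intro n _
    rw [Subalgebra.smul_def, smul_eq_mul]
    ring
  -- reduce mod M
  have hrest : ∑ n ∈ t.attach.erase ⟨M, hMt⟩, (e n.1) * ⟨(px n.1).1 * y, hterm n.1 n.2⟩ ∈ M := by
    apply Ideal.sum_mem
    intro n hn
    have hne' : M ≠ n.1 := by
      intro h
      exact (Finset.ne_of_mem_erase hn) (Subtype.ext h.symm)
    exact M.mul_mem_right _ (he2 n.1 n.2 M hMt hne')
  have hmain : (e M) * (⟨(px M).1 * y, hterm M hMt⟩ : ↥R) ∈ M := by
    have heq := Finset.add_sum_erase t.attach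
      (fun n => (e n.1) * (⟨(px n.1).1 * y, hterm n.1 n.2⟩ : ↥R)) (Finset.mem_attach t ⟨M, hMt⟩)
    have h2 : (⟨a * y, hayR⟩ : ↥R) = (e M) * ⟨(px M).1 * y, hterm M hMt⟩ +
        ∑ n ∈ t.attach.erase ⟨M, hMt⟩, (e n.1) * ⟨(px n.1).1 * y, hterm n.1 n.2⟩ := by
      rw [hsplit, ← heq]
    have h3 : (e M) * (⟨(px M).1 * y, hterm M hMt⟩ : ↥R) =
        (⟨a * y, hayR⟩ : ↥R) - ∑ n ∈ t.attach.erase ⟨M, hMt⟩,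
          (e n.1) * ⟨(px n.1).1 * y, hterm n.1 n.2⟩ := by
      rw [h2]; ring
    rw [h3]
    exact M.sub_mem hinM hrest
  haveI : M.IsPrime := hMmax.isPrime
  rcases Ideal.IsPrime.mem_or_mem ‹M.IsPrime› hmain with h | h
  · have h1M : (1 : ↥R) ∈ M := by
      have := M.sub_mem h (he1 M hMt)
      simpa using this
    exact hMmax.ne_top ((Ideal.eq_top_iff_one M).mpr h1M)
  · exact hpxn M hMt (hterm M hMt) h

end Aux4
section Aux5

variable {σ : K ≃ₐ[ℚ] K} {R : Subalgebra ℤ K}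

lemma SS'_eq_one (hσinv : ∀ x, σ (σ x) = x) (hRstable : ∀ x ∈ R, σ x ∈ R)
    (I : (Submodule R K)ˣ) :
    (I.val * conjIdeal σ R I.val) * (I.inv * conjIdeal σ R I.inv) = 1 := by
  have h1 : (I.val * conjIdeal σ R I.val) * (I.inv * conjIdeal σ R I.inv)
      = (I.val * I.inv) * (conjIdeal σ R I.val * conjIdeal σ R I.inv) := by ring
  rw [h1, ← conjIdeal_mul hσinv hRstable, I.val_inv, conjIdeal_one hσinv hRstable]
  exact one_mul (1 : Submodule R K)

set_option maxHeartbeats 2000000 in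
set_option synthInstance.maxHeartbeats 1000000 in
lemma key_lemma (hσinv : ∀ x, σ (σ x) = x) (hRstable : ∀ x ∈ R, σ x ∈ R)
    (hRfg : Module.Finite ℤ R) (I : (Submodule R K)ˣ) :
    restrictPlus σ R (I.val * conjIdeal σ R I.val) *
      restrictPlus σ R (I.inv * conjIdeal σ R I.inv) = 1 := by
  set S := I.val * conjIdeal σ R I.val with hS
  set S' := I.inv * conjIdeal σ R I.inv with hS'
  set B := restrictPlus σ R S with hB
  set B' := restrictPlus σ R S' with hB'
  have hSS' : S * S' = 1 := SS'_eq_one hσinv hRstable I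
  have hle : B * B' ≤ 1 := by
    have h2 := restrictPlus_mul_le (σ := σ) S S'
    rw [hSS', restrictPlus_one] at h2
    exact h2
  apply le_antisymm hle
  -- it suffices to show (1 : F) ∈ B * B'
  have hmain : (1 : ↥(fixedSubfield σ)) ∈ B * B' := by
    set D : Ideal ↥(orderPlus σ R) :=
      Submodule.comap (Algebra.linearMap ↥(orderPlus σ R) ↥(fixedSubfield σ)) (B * B') with hD
    by_cases hDtop : D = ⊤
    · have h1D : (1 : ↥(orderPlus σ R)) ∈ D := by rw [hDtop]; exact Submodule.mem_top
      have := h1D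
      simp only [D, Submodule.mem_comap, Algebra.linearMap_apply, map_one] at this
      exact this
    · exfalso
      obtain ⟨m, hmmax, hmD⟩ := Ideal.exists_le_maximal _ hDtop
      obtain ⟨a, haI, hsup⟩ := exists_good_a (σ := σ) hRfg I.val I.inv I.val_inv hmmax
      have hm'ne : Ideal.map (incRing σ R) m ≠ ⊤ := map_incRing_ne_top hRfg hmmax.ne_top
      have h1sup : (1 : ↥R) ∈ idealOf R (Submodule.span ↥R {a} * I.inv)
          ⊔ Ideal.map (incRing σ R) m := by rw [hsup]; exact Submodule.mem_top
      obtain ⟨j, hj, mm, hmm, hjm⟩ := Submodule.mem_sup.mp h1sup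
      obtain ⟨y, hyI', hay⟩ := Submodule.mem_span_singleton_mul.mp hj
      -- the element w = j σ(j) = (a σa)(y σy)
      set w : K := (j : K) * σ (j : K) with hw
      have hjR : (j : K) ∈ R := j.2
      have hwK : σ w = w := by
        rw [hw, map_mul, hσinv]; ring
      have hwR : w ∈ R := R.mul_mem hjR (hRstable _ hjR)
      have haσa : a * σ a ∈ S := Submodule.mul_mem_mul haI (sigma_mem_conjIdeal I.val haI)
      have haσaK : σ (a * σ a) = a * σ a := by rw [map_mul, hσinv]; ring
      have hyσy : y * σ y ∈ S' := Submodule.mul_mem_mul hyI' (sigma_mem_conjIdeal I.inv hyI')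
      have hyσyK : σ (y * σ y) = y * σ y := by rw [map_mul, hσinv]; ring
      have hweq : w = (a * σ a) * (y * σ y) := by
        rw [hw, ← hay, map_mul]; ring
      have hwBB' : (⟨w, hwK⟩ : ↥(fixedSubfield σ)) ∈ B * B' := by
        have := Submodule.mul_mem_mul
          (show (⟨a * σ a, haσaK⟩ : ↥(fixedSubfield σ)) ∈ B from haσa)
          (show (⟨y * σ y, hyσyK⟩ : ↥(fixedSubfield σ)) ∈ B' from hyσy)
        have heq : (⟨a * σ a, haσaK⟩ : ↥(fixedSubfield σ)) * ⟨y * σ y, hyσyK⟩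
            = ⟨w, hwK⟩ := by
          apply Subtype.ext
          exact hweq.symm
        rwa [heq] at this
      -- the element of the order R⁺
      have hwO : (⟨w, hwK⟩ : ↥(fixedSubfield σ)) ∈ orderPlus σ R := hwR
      set ω : ↥(orderPlus σ R) := ⟨⟨w, hwK⟩, hwO⟩ with hω
      have hωD : ω ∈ D := by
        simp only [D, Submodule.mem_comap, Algebra.linearMap_apply]
        exact hwBB'
      have hωm : ω ∈ m := hmD hωD
      have hfω : incRing σ R ω ∈ Ideal.map (incRing σ R) m := Ideal.mem_map_of_mem _ hωm
      -- conjugation on R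
      set σR := sigmaR σ R hRstable with hσR
      have hσRm : σR mm ∈ Ideal.map (incRing σ R) m := by
        have h3 : Ideal.map σR (Ideal.map (incRing σ R) m) = Ideal.map (incRing σ R) m := by
          rw [Ideal.map_map]
          congr 1
          ext α
          exact (α : ↥(fixedSubfield σ)).2
        rw [← h3]
        exact Ideal.mem_map_of_mem _ hmm
      -- now conclude 1 ∈ m'
      have hfactor : incRing σ R ω = (1 - mm) * (1 - σR mm) := by
        apply Subtype.ext
        have hj1 : (j : ↥R) = 1 - mm := by rw [← hjm]; ring
        have h1 : (j : K) = 1 - (mm : K) := by rw [hj1]; rfl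
        have h2 : (((1 - mm) * (1 - σR mm) : ↥R) : K) = (1 - (mm : K)) * (1 - σ (mm : K)) := rfl
        show w = (((1 - mm) * (1 - σR mm) : ↥R) : K)
        calc w = (j : K) * σ (j : K) := hw
        _ = (1 - (mm : K)) * σ (1 - (mm : K)) := by rw [h1]
        _ = (1 - (mm : K)) * (1 - σ (mm : K)) := by rw [map_sub, map_one]
        _ = (((1 - mm) * (1 - σR mm) : ↥R) : K) := h2.symm
      have h1m' : (1 : ↥R) ∈ Ideal.map (incRing σ R) m := by
        have hexp : (1 : ↥R) = incRing σ R ω + mm + σR mm - mm * σR mm := by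
          rw [hfactor]; ring
        rw [hexp]
        refine Ideal.sub_mem _ (Ideal.add_mem _ (Ideal.add_mem _ hfω hmm) hσRm) ?_
        exact Ideal.mul_mem_right _ _ hmm
      exact hm'ne ((Ideal.eq_top_iff_one _).mpr h1m')
  intro x hx
  rw [Submodule.one_eq_range] at hx
  obtain ⟨α, rfl⟩ := hx
  have : (algebraMap ↥(orderPlus σ R) ↥(fixedSubfield σ)) α = α • (1 : ↥(fixedSubfield σ)) := by
    rw [Algebra.smul_def, mul_one]
  rw [Algebra.linearMap_apply, this]
  exact Submodule.smul_mem _ _ hmain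

end Aux5
section Aux6

variable {σ : K ≃ₐ[ℚ] K} {R : Subalgebra ℤ K}

lemma conj_span_singleton (hRstable : ∀ x ∈ R, σ x ∈ R)
    (x : K) :
    conjIdeal σ R (Submodule.span ↥R {x}) = Submodule.span ↥R {σ x} := by
  apply le_antisymm
  · rw [conjIdeal, Submodule.span_le]
    rintro z ⟨y, hy, rfl⟩
    obtain ⟨r, rfl⟩ := Submodule.mem_span_singleton.mp hy
    have h1 : σ (r • x) = (⟨σ (r : K), hRstable _ r.2⟩ : ↥R) • σ x := by
      simp only [Subalgebra.smul_def, smul_eq_mul, map_mul]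
    rw [h1]
    exact Submodule.smul_mem _ _ (Submodule.mem_span_singleton_self _)
  · rw [Submodule.span_le]
    intro z hz
    rw [Set.mem_singleton_iff] at hz
    subst hz
    exact sigma_mem_conjIdeal _ (Submodule.mem_span_singleton_self x)

lemma restrict_span_singleton (x : K) (hx : x ≠ 0)
    (hfix : σ (x * σ x) = x * σ x) :
    restrictPlus σ R (Submodule.span ↥R {x * σ x}) =
      Submodule.span ↥(orderPlus σ R) {(⟨x * σ x, hfix⟩ : ↥(fixedSubfield σ))} := by
  have hσx : σ x ≠ 0 := fun h => hx (by simpa using σ.injective (h.trans (map_zero σ).symm))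
  have hxx : x * σ x ≠ 0 := mul_ne_zero hx hσx
  apply le_antisymm
  · intro z hz
    rw [mem_restrictPlus_iff] at hz
    obtain ⟨r, hr⟩ := Submodule.mem_span_singleton.mp hz
    have hrmul : (r : K) * (x * σ x) = (z : K) := by
      rw [← hr]; rfl
    have hrval : (r : K) = (z : K) / (x * σ x) := by
      rw [eq_div_iff hxx, hrmul]
    have hfixr : σ (r : K) = (r : K) := by
      have hz2 : σ ((z : ↥(fixedSubfield σ)) : K) = ((z : ↥(fixedSubfield σ)) : K) :=
        (z : ↥(fixedSubfield σ)).2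
      rw [hrval, map_div₀, hfix, hz2]
    refine Submodule.mem_span_singleton.mpr
      ⟨⟨⟨(r : K), hfixr⟩, r.2⟩, ?_⟩
    apply Subtype.ext
    show (r : K) * (x * σ x) = ((z : ↥(fixedSubfield σ)) : K)
    exact hrmul
  · rw [Submodule.span_le]
    intro ζ hζ
    rw [Set.mem_singleton_iff] at hζ
    subst hζ
    show x * σ x ∈ Submodule.span ↥R {x * σ x}
    exact Submodule.mem_span_singleton_self _

set_option synthInstance.maxHeartbeats 1000000 in
set_option maxHeartbeats 1000000 in
lemma totallyPos [NumberField K]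
    (hconj : ∀ (ψ : K →+* ℂ) (x : K), ψ (σ x) = starRingEnd ℂ (ψ x))
    {x : K} (hx : x ≠ 0) (hfix : σ (x * σ x) = x * σ x)
    (φ : ↥(fixedSubfield σ) →+* ℝ) : 0 < φ ⟨x * σ x, hfix⟩ := by
  letI : Algebra ↥(fixedSubfield σ) ℂ := (Complex.ofRealHom.comp φ).toAlgebra
  haveI : IsScalarTower ℚ ↥(fixedSubfield σ) K :=
    IsScalarTower.of_algebraMap_eq' (Subsingleton.elim _ _)
  haveI : Module.Finite ↥(fixedSubfield σ) K :=
    Module.Finite.of_restrictScalars_finite ℚ ↥(fixedSubfield σ) K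
  haveI : Algebra.IsAlgebraic ↥(fixedSubfield σ) K :=
    Algebra.IsAlgebraic.of_finite ↥(fixedSubfield σ) K
  haveI : NoZeroSMulDivisors ↥(fixedSubfield σ) ℂ :=
    GroupWithZero.toNoZeroSMulDivisors
  have ψ : K →ₐ[↥(fixedSubfield σ)] ℂ := IsAlgClosed.lift
  set ξ : ↥(fixedSubfield σ) := ⟨x * σ x, hfix⟩ with hξ
  have hcommutes : ψ ((ξ : K)) = algebraMap ↥(fixedSubfield σ) ℂ ξ := by
    have h1 := ψ.commutes ξ
    have h2 : algebraMap ↥(fixedSubfield σ) K ξ = (ξ : K) := rfl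
    rw [h2] at h1
    exact h1
  have hval : algebraMap ↥(fixedSubfield σ) ℂ ξ = Complex.ofReal (φ ξ) := rfl
  have hlhs : ψ ((ξ : K)) = Complex.normSq (ψ x) := by
    have h3 : (ξ : K) = x * σ x := rfl
    rw [h3, map_mul]
    have h4 : ψ (σ x) = starRingEnd ℂ (ψ x) := hconj ψ.toRingHom x
    rw [h4]
    exact Complex.mul_conj (ψ x)
  have heq : Complex.ofReal (φ ξ) = Complex.ofReal (Complex.normSq (ψ x)) := by
    rw [← hval, ← hcommutes, hlhs]
  have hre : φ ξ = Complex.normSq (ψ x) := Complex.ofReal_inj.mp heq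
  rw [hre]
  apply Complex.normSq_pos.mpr
  intro h0
  have : (x : K) = 0 := by
    have hinj : Function.Injective ψ.toRingHom := ψ.toRingHom.injective
    exact hinj (by simpa using h0)
  exact hx this

end Aux6
section Aux7

variable {σ : K ≃ₐ[ℚ] K} {R : Subalgebra ℤ K}

set_option maxHeartbeats 1000000 in
set_option synthInstance.maxHeartbeats 1000000 in
lemma restrict_mul (hσinv : ∀ x, σ (σ x) = x) (hRstable : ∀ x ∈ R, σ x ∈ R)
    (hRfg : Module.Finite ℤ R) (I₁ I₂ : (Submodule R K)ˣ) :
    restrictPlus σ R ((I₁.val * conjIdeal σ R I₁.val) * (I₂.val * conjIdeal σ R I₂.val)) =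
      restrictPlus σ R (I₁.val * conjIdeal σ R I₁.val) *
        restrictPlus σ R (I₂.val * conjIdeal σ R I₂.val) := by
  set S₁ := I₁.val * conjIdeal σ R I₁.val with hS₁
  set S₂ := I₂.val * conjIdeal σ R I₂.val with hS₂
  set S₁' := I₁.inv * conjIdeal σ R I₁.inv with hS₁'
  set S₂' := I₂.inv * conjIdeal σ R I₂.inv with hS₂'
  set B₁ := restrictPlus σ R S₁ with hB₁
  set B₂ := restrictPlus σ R S₂ with hB₂
  set B₁' := restrictPlus σ R S₁' with hB₁'
  set B₂' := restrictPlus σ R S₂' with hB₂'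
  have hkey₁ : B₁ * B₁' = 1 := key_lemma hσinv hRstable hRfg I₁
  have hkey₂ : B₂ * B₂' = 1 := key_lemma hσinv hRstable hRfg I₂
  apply le_antisymm
  · have hprod : (S₁ * S₂) * (S₁' * S₂') = 1 := by
      have e1 : S₁ * S₁' = 1 := SS'_eq_one hσinv hRstable I₁
      have e2 : S₂ * S₂' = 1 := SS'_eq_one hσinv hRstable I₂
      calc (S₁ * S₂) * (S₁' * S₂') = (S₁ * S₁') * (S₂ * S₂') := by ring
      _ = 1 := by rw [e1, e2, one_mul (1 : Submodule R K)]
    have h1 : restrictPlus σ R (S₁ * S₂) * (B₁' * B₂') ≤ 1 := by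
      calc restrictPlus σ R (S₁ * S₂) * (B₁' * B₂')
          ≤ restrictPlus σ R (S₁ * S₂) * restrictPlus σ R (S₁' * S₂') :=
            mul_le_mul' le_rfl (restrictPlus_mul_le S₁' S₂')
        _ ≤ restrictPlus σ R ((S₁ * S₂) * (S₁' * S₂')) := restrictPlus_mul_le _ _
        _ = 1 := by rw [hprod, restrictPlus_one]
    have hone : (B₁ * B₁') * (B₂ * B₂') = 1 := by
      rw [hkey₁, hkey₂,
        one_mul (1 : Submodule ↥(orderPlus σ R) ↥(fixedSubfield σ))]
    calc restrictPlus σ R (S₁ * S₂)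
        = restrictPlus σ R (S₁ * S₂) * ((B₁ * B₁') * (B₂ * B₂')) := by
          rw [hone]
          exact (mul_one (restrictPlus σ R (S₁ * S₂))).symm
      _ = (restrictPlus σ R (S₁ * S₂) * (B₁' * B₂')) * (B₁ * B₂) := by ring
      _ ≤ 1 * (B₁ * B₂) := mul_le_mul' h1 le_rfl
      _ = B₁ * B₂ := by exact one_mul (B₁ * B₂)
  · exact restrictPlus_mul_le S₁ S₂

/-- The unit of `Submodule R⁺ K⁺` given by the norm of a unit of `Submodule R K`. -/
def normUnit (σ : K ≃ₐ[ℚ] K) (R : Subalgebra ℤ K) (hσinv : ∀ x, σ (σ x) = x)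
    (hRstable : ∀ x ∈ R, σ x ∈ R) (hRfg : Module.Finite ℤ R)
    (I : (Submodule R K)ˣ) : (Submodule (orderPlus σ R) ↥(fixedSubfield σ))ˣ where
  val := restrictPlus σ R (I.val * conjIdeal σ R I.val)
  inv := restrictPlus σ R (I.inv * conjIdeal σ R I.inv)
  val_inv := key_lemma hσinv hRstable hRfg I
  inv_val := by
    show restrictPlus σ R (I.inv * conjIdeal σ R I.inv) *
        restrictPlus σ R (I.val * conjIdeal σ R I.val) = 1
    rw [mul_comm (restrictPlus σ R (I.inv * conjIdeal σ R I.inv))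
      (restrictPlus σ R (I.val * conjIdeal σ R I.val))]
    exact key_lemma hσinv hRstable hRfg I

lemma normUnit_mul (hσinv : ∀ x, σ (σ x) = x) (hRstable : ∀ x ∈ R, σ x ∈ R)
    (hRfg : Module.Finite ℤ R) (I₁ I₂ : (Submodule R K)ˣ) :
    normUnit σ R hσinv hRstable hRfg (I₁ * I₂) =
      normUnit σ R hσinv hRstable hRfg I₁ * normUnit σ R hσinv hRstable hRfg I₂ := by
  apply Units.ext
  show restrictPlus σ R ((I₁ * I₂).val * conjIdeal σ R (I₁ * I₂).val) = _
  have h1 : (I₁ * I₂).val = I₁.val * I₂.val := rfl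
  have h2 : (I₁.val * I₂.val) * conjIdeal σ R (I₁.val * I₂.val)
      = (I₁.val * conjIdeal σ R I₁.val) * (I₂.val * conjIdeal σ R I₂.val) := by
    rw [conjIdeal_mul hσinv hRstable]
    ring
  rw [h1, h2, restrict_mul hσinv hRstable hRfg]
  rfl

end Aux7
/-- Let `K` be a CM number field of degree `2g` with complex
conjugation `σ` and maximal totally real subfield `K⁺`, let `R` be an order in `K`
stable under complex conjugation, and `R⁺ = R ∩ K⁺`.  Then the norm map `I ↦ I·Ī`
induces a well-defined group homomorphism `N : Cl(R) → Cl⁺(R⁺)` from the class group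
of `R` to the narrow class group of `R⁺`: there is a group homomorphism `N` sending
the class of each invertible fractional ideal `I` to the class of the invertible
`R⁺`-ideal `(I·Ī) ∩ K⁺`. -/
theorem stmt_12 [NumberField K] (g : ℕ) (hg : 0 < g)
    (hdeg : Module.finrank ℚ K = 2 * g)
    (σ : K ≃ₐ[ℚ] K) (hσinv : ∀ x, σ (σ x) = x) (hσne : σ ≠ (AlgEquiv.refl : K ≃ₐ[ℚ] K))
    (hconj : ∀ (ψ : K →+* ℂ) (x : K), ψ (σ x) = starRingEnd ℂ (ψ x))
    (R : Subalgebra ℤ K) (hRfg : Module.Finite ℤ R)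
    (hRfull : ∀ x : K, ∃ n : ℤ, n ≠ 0 ∧ (n : K) * x ∈ R)
    (hRstable : ∀ x ∈ R, σ x ∈ R) :
    ∃ N : (Submodule R K)ˣ ⧸ principalSubgroup R →*
        (Submodule (orderPlus σ R) ↥(fixedSubfield σ))ˣ ⧸ narrowPrincipalSubgroup σ R,
      ∀ I : (Submodule R K)ˣ,
        ∃ J : (Submodule (orderPlus σ R) ↥(fixedSubfield σ))ˣ,
          (J : Submodule (orderPlus σ R) ↥(fixedSubfield σ))
              = restrictPlus σ R ((I : Submodule R K) * conjIdeal σ R I) ∧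
            N (QuotientGroup.mk I) = QuotientGroup.mk J := by
  classical
  set N' : (Submodule R K)ˣ →* (Submodule (orderPlus σ R) ↥(fixedSubfield σ))ˣ :=
    MonoidHom.mk' (normUnit σ R hσinv hRstable hRfg)
      (normUnit_mul hσinv hRstable hRfg) with hN'
  have hle : principalSubgroup R ≤
      Subgroup.comap N' (narrowPrincipalSubgroup σ R) := by
    rw [principalSubgroup]
    apply (Subgroup.closure_le _).mpr
    rintro u ⟨x, hx0, hux⟩
    show N' u ∈ narrowPrincipalSubgroup σ R
    apply Subgroup.subset_closure
    have hfix : σ (x * σ x) = x * σ x := by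
      rw [map_mul, hσinv]; ring
    refine ⟨⟨x * σ x, hfix⟩, fun φ => totallyPos hconj hx0 hfix φ, ?_⟩
    show restrictPlus σ R (u.val * conjIdeal σ R u.val) = _
    rw [hux, conj_span_singleton hRstable, Submodule.span_mul_span,
      Set.singleton_mul_singleton, restrict_span_singleton x hx0 hfix]
  have hker : ∀ u ∈ principalSubgroup R,
      ((QuotientGroup.mk' (narrowPrincipalSubgroup σ R)).comp N') u = 1 := by
    intro u hu
    rw [MonoidHom.comp_apply]
    rw [QuotientGroup.mk'_apply, QuotientGroup.eq_one_iff]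
    exact hle hu
  refine ⟨QuotientGroup.lift (principalSubgroup R)
    ((QuotientGroup.mk' (narrowPrincipalSubgroup σ R)).comp N')
    (fun u hu => (MonoidHom.mem_ker).mpr (hker u hu)), ?_⟩
  intro I
  refine ⟨normUnit σ R hσinv hRstable hRfg I, rfl, ?_⟩
  rw [QuotientGroup.lift_mk]
  rfl
end
end
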